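/- (Bellman optimality) Let π* be an optimal policy and S* the set of non-terminal states in its trajectory from Ω (i.e. in T_{Ω,t}^{π*} for 0 ≤ t ≤ τ_Ω^{π*} − 1). If a policy π satisfies V^π(l) = max_{a ∈ A(l)} Q^π(l, a) for every l ∈ S*, then π is optimal, i.e. V^π(Ω) = max_ρ V^ρ(Ω); moreover π(l) attains the maximum of a ↦ Q^π(l, a) over A(l) for every l ∈ S*. -/

import Mathlib

open Finset

/-- A branch: for each feature, either unused (`none`) or fixed to a category. -/
abbrev Branch (q : ℕ) (C : Fin q → ℕ) : Type := ∀ i : Fin q, Option (Fin (C i))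

/-- States: `Sum.inl l` is the (non-terminal) branch `l`, `Sum.inr l` is its terminal state `l̄`. -/
abbrev BState (q : ℕ) (C : Fin q → ℕ) : Type := Branch q C ⊕ Branch q C

/-- The root branch `Ω`. -/
def root (q : ℕ) (C : Fin q → ℕ) : Branch q C := fun _ => none

/-- The child of `l` obtained by fixing unused feature `i` to category `j`. -/
def child {q : ℕ} {C : Fin q → ℕ} (l : Branch q C) (i : Fin q) (j : Fin (C i)) : Branch q C :=
  Function.update l i (some j)

/-- `Children(l, i)`. -/
def childrenF {q : ℕ} {C : Fin q → ℕ} (l : Branch q C) (i : Fin q) : Finset (Branch q C) :=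
  Finset.univ.image (fun j : Fin (C i) => child l i j)

/-- A policy: `act l = none` is the terminal action `ā`, `act l = some i` splits on the
unused feature `i`. -/
structure Policy (q : ℕ) (C : Fin q → ℕ) where
  act : Branch q C → Option (Fin q)
  valid : ∀ l i, act l = some i → l i = none

/-- Transition set of the action taken by `π` at branch `l`. -/
def stepSet {q : ℕ} {C : Fin q → ℕ} (π : Policy q C) (l : Branch q C) : Finset (BState q C) :=
  match π.act l with
  | none => {Sum.inr l}
  | some i => (childrenF l i).image Sum.inl

/-- Trajectory of policy `π` from branch `l`. -/
def traj {q : ℕ} {C : Fin q → ℕ} (π : Policy q C) (l : Branch q C) : ℕ → Finset (BState q C)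
  | 0 => {Sum.inl l}
  | t + 1 => (traj π l t).biUnion
      (fun s => Sum.elim (fun lu => stepSet π lu) (fun lu => ({Sum.inr lu} : Finset (BState q C))) s)

/-- `τ_l^π`: minimal time `t ≥ 1` at which the trajectory consists of terminal states only. -/
noncomputable def tau {q : ℕ} {C : Fin q → ℕ} (π : Policy q C) (l : Branch q C) : ℕ :=
  sInf {t : ℕ | 1 ≤ t ∧ ∀ x ∈ traj π l t, x.isRight}

/-- A data point `x` is in branch `l`. -/
def inBranch {q : ℕ} {C : Fin q → ℕ} (l : Branch q C) (x : ∀ i : Fin q, Fin (C i)) : Prop :=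
  ∀ (i : Fin q) (c : Fin (C i)), l i = some c → x i = c

instance {q : ℕ} {C : Fin q → ℕ} (l : Branch q C) (x : ∀ i, Fin (C i)) :
    Decidable (inBranch l x) := by unfold inBranch; infer_instance

/-- `n(l)`: number of data points in `l`. -/
def nIn {q K : ℕ} {C : Fin q → ℕ} (D : Multiset ((∀ i : Fin q, Fin (C i)) × Fin K))
    (l : Branch q C) : ℕ :=
  (D.filter (fun p => inBranch l p.1)).card

/-- `n_k(l)`: number of data points in `l` of class `k`. -/
def nk {q K : ℕ} {C : Fin q → ℕ} (D : Multiset ((∀ i : Fin q, Fin (C i)) × Fin K))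
    (l : Branch q C) (k : Fin K) : ℕ :=
  (D.filter (fun p => inBranch l p.1 ∧ p.2 = k)).card

/-- `H(l) = (max_k n_k(l)) / n`. -/
noncomputable def Hb {q K : ℕ} {C : Fin q → ℕ} (D : Multiset ((∀ i : Fin q, Fin (C i)) × Fin K))
    (l : Branch q C) : ℝ :=
  ((Finset.univ.sup (fun k : Fin K => nk D l k) : ℕ) : ℝ) / (Multiset.card D : ℝ)

/-- Reward collected at a state of the trajectory: `H(l)` for the terminal action,
`-λ` for a split action, `0` at terminal states. -/
noncomputable def rew {q K : ℕ} {C : Fin q → ℕ}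
    (D : Multiset ((∀ i : Fin q, Fin (C i)) × Fin K)) (lam : ℝ) (π : Policy q C) :
    BState q C → ℝ
  | Sum.inl lu => match π.act lu with
      | none => Hb D lu
      | some _ => -lam
  | Sum.inr _ => 0

/-- Value `V^π(l)`. -/
noncomputable def V {q K : ℕ} {C : Fin q → ℕ}
    (D : Multiset ((∀ i : Fin q, Fin (C i)) × Fin K)) (lam : ℝ)
    (π : Policy q C) (l : Branch q C) : ℝ :=
  ∑ t ∈ Finset.range (tau π l), ∑ x ∈ traj π l t, rew D lam π x

/-- State-action value `Q^π(l, a)`. -/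
noncomputable def Qv {q K : ℕ} {C : Fin q → ℕ}
    (D : Multiset ((∀ i : Fin q, Fin (C i)) × Fin K)) (lam : ℝ)
    (π : Policy q C) (l : Branch q C) : Option (Fin q) → ℝ
  | none => Hb D l
  | some i => -lam + ∑ j : Fin (C i), V D lam π (child l i j)

/-- The available actions `A(l)`. -/
def Avail {q : ℕ} {C : Fin q → ℕ} (l : Branch q C) : Finset (Option (Fin q)) :=
  insert none ((Finset.univ.filter (fun i : Fin q => l i = none)).image some)

theorem Avail_nonempty {q : ℕ} {C : Fin q → ℕ} (l : Branch q C) : (Avail l).Nonempty :=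
  ⟨none, Finset.mem_insert_self _ _⟩

/-- The sub-DT of `π` rooted in `l`: the branches whose terminal states constitute
the trajectory at time `τ_l^π`. -/
noncomputable def subDTof {q : ℕ} {C : Fin q → ℕ} (π : Policy q C) (l : Branch q C) : Finset (Branch q C) :=
  (traj π l (tau π l)).image (Sum.elim id id)

/-- `SubDT l T m`: `T` is a sub-DT rooted in `l` obtained by `m` split operations. -/
inductive SubDT {q : ℕ} {C : Fin q → ℕ} : Branch q C → Finset (Branch q C) → ℕ → Prop
  | leaf (l : Branch q C) : SubDT l {l} 0
  | split (l : Branch q C) (T : Finset (Branch q C)) (m : ℕ) (l' : Branch q C) (i : Fin q)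
      (hT : SubDT l T m) (hmem : l' ∈ T) (hnone : l' i = none) :
      SubDT l (T.erase l' ∪ childrenF l' i) (m + 1)

/-- `H(T) = ∑_{l ∈ T} H(l)`. -/
noncomputable def HT {q K : ℕ} {C : Fin q → ℕ}
    (D : Multiset ((∀ i : Fin q, Fin (C i)) × Fin K)) (T : Finset (Branch q C)) : ℝ :=
  ∑ l ∈ T, Hb D l

/-- `splits(l)`: number of features used by branch `l`. -/
def nsplits {q : ℕ} {C : Fin q → ℕ} (l : Branch q C) : ℕ :=
  (Finset.univ.filter (fun i : Fin q => l i ≠ none)).card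

section Aux

variable {q K : ℕ} {C : Fin q → ℕ}

lemma child_apply_same (l : Branch q C) (i : Fin q) (j : Fin (C i)) :
    child l i j i = some j := by simp [child]

lemma child_apply_ne (l : Branch q C) (i : Fin q) (j : Fin (C i)) {i' : Fin q} (h : i' ≠ i) :
    child l i j i' = l i' := Function.update_of_ne h _ _

lemma traj_zero (π : Policy q C) (l : Branch q C) : traj π l 0 = {Sum.inl l} := rfl

lemma traj_succ (π : Policy q C) (l : Branch q C) (t : ℕ) :
    traj π l (t+1) = (traj π l t).biUnion
      (fun s => Sum.elim (fun lu => stepSet π lu)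
        (fun lu => ({Sum.inr lu} : Finset (BState q C))) s) := rfl

lemma nsplits_child {l : Branch q C} {i : Fin q} (h : l i = none) (j : Fin (C i)) :
    nsplits (child l i j) = nsplits l + 1 := by
  unfold nsplits
  have heq : (Finset.univ.filter fun i' => child l i j i' ≠ none) =
      insert i (Finset.univ.filter fun i' : Fin q => l i' ≠ none) := by
    ext i'
    by_cases hii : i' = i
    · subst hii; simp [child_apply_same]
    · simp [child_apply_ne l i j hii, hii]
  rw [heq, Finset.card_insert_of_notMem (by simp [h])]

lemma traj_left_nsplits (π : Policy q C) (l : Branch q C) :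
    ∀ t lu, Sum.inl lu ∈ traj π l t → nsplits l + t ≤ nsplits lu := by
  intro t
  induction t with
  | zero =>
    intro lu h
    rw [traj_zero] at h
    simp only [Finset.mem_singleton, Sum.inl.injEq] at h
    subst h; omega
  | succ t ih =>
    intro lu h
    rw [traj_succ, Finset.mem_biUnion] at h
    obtain ⟨s, hs, hx⟩ := h
    cases s with
    | inr lv => simp at hx
    | inl lv =>
      simp only [Sum.elim_inl] at hx
      unfold stepSet at hx
      cases hact : π.act lv with
      | none => rw [hact] at hx; simp at hx
      | some i =>
        rw [hact] at hx
        simp only [childrenF, Finset.mem_image, Finset.mem_image, Finset.mem_univ] at hx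
        obtain ⟨b, ⟨j, _, hj⟩, hb⟩ := hx
        have hlu : lu = child lv i j := by
          rw [hj]; exact (Sum.inl.inj hb).symm
        have hnone : lv i = none := π.valid _ _ hact
        have h1 := ih lv hs
        rw [hlu, nsplits_child hnone]
        omega

lemma nsplits_le_q (l : Branch q C) : nsplits l ≤ q := by
  unfold nsplits
  calc (Finset.univ.filter fun i : Fin q => l i ≠ none).card ≤ (Finset.univ : Finset (Fin q)).card :=
        Finset.card_filter_le _ _
    _ = q := by simp

lemma traj_allRight_qsucc (π : Policy q C) (l : Branch q C) :
    ∀ x ∈ traj π l (q+1), x.isRight := by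
  intro x hx
  cases x with
  | inr _ => simp
  | inl lu =>
    have h1 := traj_left_nsplits π l (q+1) lu hx
    have h2 := nsplits_le_q lu
    omega

lemma tau_mem (π : Policy q C) (l : Branch q C) :
    1 ≤ tau π l ∧ ∀ x ∈ traj π l (tau π l), x.isRight :=
  Nat.sInf_mem (⟨q+1, by omega, traj_allRight_qsucc π l⟩ :
    {t : ℕ | 1 ≤ t ∧ ∀ x ∈ traj π l t, x.isRight}.Nonempty)

lemma tau_le (π : Policy q C) (l : Branch q C) : tau π l ≤ q + 1 :=
  Nat.sInf_le ⟨by omega, traj_allRight_qsucc π l⟩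

lemma traj_absorb (π : Policy q C) (l : Branch q C) {t : ℕ}
    (h : ∀ x ∈ traj π l t, x.isRight) : traj π l (t+1) = traj π l t := by
  rw [traj_succ]
  ext x
  rw [Finset.mem_biUnion]
  constructor
  · rintro ⟨s, hs, hx⟩
    cases s with
    | inl lv => exact absurd (h _ hs) (by simp)
    | inr lv => simp only [Sum.elim_inr, Finset.mem_singleton] at hx; subst hx; exact hs
  · intro hx
    refine ⟨x, hx, ?_⟩
    cases x with
    | inl lv => exact absurd (h _ hx) (by simp)
    | inr lv => simp

lemma traj_allRight_mono (π : Policy q C) (l : Branch q C) {t t' : ℕ} (htt : t ≤ t')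
    (h : ∀ x ∈ traj π l t, x.isRight) : ∀ x ∈ traj π l t', x.isRight := by
  induction t', htt using Nat.le_induction with
  | base => exact h
  | succ t' htt ih => rw [traj_absorb π l ih]; exact ih

lemma lt_tau_of_mem (π : Policy q C) (l lu : Branch q C) {t : ℕ}
    (h : Sum.inl lu ∈ traj π l t) : t < tau π l := by
  by_contra hle
  push_neg at hle
  have := traj_allRight_mono π l hle (tau_mem π l).2 _ h
  simp at this

lemma V_eq_sumN (D : Multiset ((∀ i : Fin q, Fin (C i)) × Fin K)) (lam : ℝ)
    (π : Policy q C) (l : Branch q C) {N : ℕ} (hN : tau π l ≤ N) :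
    V D lam π l = ∑ t ∈ Finset.range N, ∑ x ∈ traj π l t, rew D lam π x := by
  unfold V
  apply Finset.sum_subset (Finset.range_subset_range.2 hN)
  intro t _ hnt
  simp only [Finset.mem_range, not_lt] at hnt
  have hall := traj_allRight_mono π l hnt (tau_mem π l).2
  apply Finset.sum_eq_zero
  intro x hx
  have hr := hall x hx
  cases x with
  | inl _ => simp at hr
  | inr _ => simp [rew]

lemma traj_none (π : Policy q C) {l : Branch q C} (h : π.act l = none) :
    ∀ t, traj π l (t+1) = {Sum.inr l} := by
  intro t
  induction t with
  | zero => rw [traj_succ, traj_zero]; simp [stepSet, h]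
  | succ t ih => rw [traj_succ, ih]; simp

lemma V_none (D : Multiset ((∀ i : Fin q, Fin (C i)) × Fin K)) (lam : ℝ)
    (π : Policy q C) {l : Branch q C} (h : π.act l = none) :
    V D lam π l = Hb D l := by
  rw [V_eq_sumN D lam π l (tau_le π l), Finset.sum_range_succ']
  have h0 : ∑ x ∈ traj π l 0, rew D lam π x = Hb D l := by
    rw [traj_zero]; simp [rew, h]
  have h1 : ∀ t, ∑ x ∈ traj π l (t+1), rew D lam π x = 0 := by
    intro t; rw [traj_none π h]; simp [rew]
  simp [h0, h1]

lemma traj_extends (π : Policy q C) (c : Branch q C) :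
    ∀ t s, s ∈ traj π c t → ∀ (i : Fin q) (v : Fin (C i)), c i = some v →
      Sum.elim id id s i = some v := by
  intro t
  induction t with
  | zero =>
    intro s hs i v hc
    rw [traj_zero] at hs
    simp only [Finset.mem_singleton] at hs
    subst hs; simpa
  | succ t ih =>
    intro s hs i v hc
    rw [traj_succ, Finset.mem_biUnion] at hs
    obtain ⟨u, hu, hsu⟩ := hs
    cases u with
    | inr lv =>
      simp only [Sum.elim_inr, Finset.mem_singleton] at hsu
      subst hsu; exact ih _ hu i v hc
    | inl lv =>
      have hlv := ih _ hu i v hc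
      simp only [Sum.elim_inl, id_eq] at hlv
      simp only [Sum.elim_inl] at hsu
      unfold stepSet at hsu
      cases hact : π.act lv with
      | none =>
        rw [hact] at hsu
        simp only [Finset.mem_singleton] at hsu
        subst hsu; simpa
      | some i' =>
        rw [hact] at hsu
        simp only [childrenF, Finset.mem_image, Finset.mem_univ] at hsu
        obtain ⟨b, ⟨j, _, hj⟩, hb⟩ := hsu
        subst hb
        subst hj
        have hne : i ≠ i' := by
          rintro rfl
          rw [π.valid _ _ hact] at hlv
          cases hlv
        simpa [child_apply_ne lv i' j hne] using hlv

lemma traj_split (π : Policy q C) {l : Branch q C} {i : Fin q} (h : π.act l = some i) :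
    ∀ t, traj π l (t+1) =
      Finset.univ.biUnion (fun j : Fin (C i) => traj π (child l i j) t) := by
  intro t
  induction t with
  | zero =>
    rw [traj_succ, traj_zero]
    ext x
    simp only [Finset.singleton_biUnion, Sum.elim_inl, stepSet, h, childrenF,
      Finset.mem_image, Finset.mem_biUnion, Finset.mem_univ, true_and, traj_zero,
      Finset.mem_singleton]
    constructor
    · rintro ⟨b, ⟨j, rfl⟩, rfl⟩; exact ⟨j, rfl⟩
    · rintro ⟨j, rfl⟩; exact ⟨child l i j, ⟨j, rfl⟩, rfl⟩
  | succ t ih =>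
    rw [traj_succ, ih, Finset.biUnion_biUnion]
    exact Finset.biUnion_congr rfl (fun j _ => (traj_succ π (child l i j) t).symm)

lemma sum_traj_split (D : Multiset ((∀ i : Fin q, Fin (C i)) × Fin K)) (lam : ℝ)
    (π : Policy q C) {l : Branch q C} {i : Fin q} (h : π.act l = some i) (t : ℕ) :
    ∑ x ∈ traj π l (t+1), rew D lam π x
      = ∑ j : Fin (C i), ∑ x ∈ traj π (child l i j) t, rew D lam π x := by
  rw [traj_split π h t]
  apply Finset.sum_biUnion
  intro j _ j' _ hjj
  simp only [Function.onFun]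
  rw [Finset.disjoint_left]
  intro x hx hx'
  have h1 := traj_extends π (child l i j) t x hx i j (child_apply_same l i j)
  have h2 := traj_extends π (child l i j') t x hx' i j' (child_apply_same l i j')
  rw [h1] at h2
  exact hjj (Option.some.inj h2)

lemma V_some (D : Multiset ((∀ i : Fin q, Fin (C i)) × Fin K)) (lam : ℝ)
    (π : Policy q C) {l : Branch q C} {i : Fin q} (h : π.act l = some i) :
    V D lam π l = -lam + ∑ j : Fin (C i), V D lam π (child l i j) := by
  rw [V_eq_sumN D lam π l (N := q+2) (by have := tau_le π l; omega),
    Finset.sum_range_succ']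
  have h0 : ∑ x ∈ traj π l 0, rew D lam π x = -lam := by
    rw [traj_zero]; simp [rew, h]
  have hstep : ∑ t ∈ Finset.range (q+1), ∑ x ∈ traj π l (t+1), rew D lam π x
      = ∑ j : Fin (C i), V D lam π (child l i j) := by
    rw [Finset.sum_congr rfl (fun t _ => sum_traj_split D lam π h t), Finset.sum_comm]
    exact Finset.sum_congr rfl (fun j _ => (V_eq_sumN D lam π _ (tau_le _ _)).symm)
  rw [h0, hstep]
  ring

lemma V_eq_Q (D : Multiset ((∀ i : Fin q, Fin (C i)) × Fin K)) (lam : ℝ)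
    (π : Policy q C) (l : Branch q C) :
    V D lam π l = Qv D lam π l (π.act l) := by
  cases hact : π.act l with
  | none => rw [V_none D lam π hact]; rfl
  | some i => rw [V_some D lam π hact]; rfl

lemma none_mem_Avail (l : Branch q C) : (none : Option (Fin q)) ∈ Avail l :=
  Finset.mem_insert_self _ _

lemma some_mem_Avail (l : Branch q C) (i : Fin q) (h : l i = none) :
    (some i : Option (Fin q)) ∈ Avail l := by
  unfold Avail
  apply Finset.mem_insert_of_mem
  simp [h]

end Aux

/-- **Bellman optimality.** If a policy `π` satisfies
`V^π(l) = max_{a ∈ A(l)} Q^π(l,a)` on the non-terminal states of the trajectory of an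
optimal policy `πs` from the root, then `π` is optimal, and `π(l)` attains the
maximum of `Q^π(l, ·)` on those states. -/
theorem bellman_optimality {q K : ℕ} (hq : 2 ≤ q) (hK : 2 ≤ K)
    {C : Fin q → ℕ} (hC : ∀ i, 2 ≤ C i)
    (D : Multiset ((∀ i : Fin q, Fin (C i)) × Fin K)) (hD : D ≠ 0)
    (lam : ℝ) (hlam0 : 0 < lam) (hlam1 : lam < 1)
    (πs : Policy q C)
    (hopt : ∀ π : Policy q C, V D lam π (root q C) ≤ V D lam πs (root q C))
    (π : Policy q C)
    (hbell : ∀ l : Branch q C,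
      (∃ t < tau πs (root q C), Sum.inl l ∈ traj πs (root q C) t) →
      V D lam π l = (Avail l).sup' (Avail_nonempty l) (Qv D lam π l)) :
    (∀ ρ : Policy q C, V D lam ρ (root q C) ≤ V D lam π (root q C)) ∧
    (∀ l : Branch q C,
      (∃ t < tau πs (root q C), Sum.inl l ∈ traj πs (root q C) t) →
      Qv D lam π l (π.act l) = (Avail l).sup' (Avail_nonempty l) (Qv D lam π l)) := by
  have hQle : ∀ l : Branch q C,
      (∃ t < tau πs (root q C), Sum.inl l ∈ traj πs (root q C) t) →
      ∀ a ∈ Avail l, Qv D lam π l a ≤ V D lam π l := by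
    intro l hl a ha
    rw [hbell l hl]
    exact Finset.le_sup' _ ha
  have key : ∀ d t (l : Branch q C), Sum.inl l ∈ traj πs (root q C) t →
      tau πs (root q C) ≤ t + d → V D lam πs l ≤ V D lam π l := by
    intro d
    induction d with
    | zero =>
      intro t l hmem hle
      exact absurd (lt_tau_of_mem πs _ _ hmem) (by omega)
    | succ d ih =>
      intro t l hmem hle
      have hS : ∃ t' < tau πs (root q C), Sum.inl l ∈ traj πs (root q C) t' :=
        ⟨t, lt_tau_of_mem πs _ _ hmem, hmem⟩
      cases hact : πs.act l with
      | none =>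
        rw [V_none D lam πs hact]
        have hq := hQle l hS none (none_mem_Avail l)
        simpa [Qv] using hq
      | some i =>
        rw [V_some D lam πs hact]
        have hchild : ∀ j : Fin (C i),
            Sum.inl (child l i j) ∈ traj πs (root q C) (t+1) := by
          intro j
          rw [traj_succ, Finset.mem_biUnion]
          refine ⟨Sum.inl l, hmem, ?_⟩
          simp only [Sum.elim_inl]
          unfold stepSet
          rw [hact]
          simp only [childrenF, Finset.mem_image, Finset.mem_univ]
          exact ⟨child l i j, ⟨j, by simp, rfl⟩, rfl⟩
        have hQ := hQle l hS (some i) (some_mem_Avail l i (πs.valid _ _ hact))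
        have hsum : ∑ j : Fin (C i), V D lam πs (child l i j)
            ≤ ∑ j : Fin (C i), V D lam π (child l i j) :=
          Finset.sum_le_sum (fun j _ => ih (t+1) _ (hchild j) (by omega))
        calc -lam + ∑ j : Fin (C i), V D lam πs (child l i j)
            ≤ -lam + ∑ j : Fin (C i), V D lam π (child l i j) := by linarith
          _ = Qv D lam π l (some i) := rfl
          _ ≤ V D lam π l := hQ
  have hroot : V D lam πs (root q C) ≤ V D lam π (root q C) :=
    key (tau πs (root q C)) 0 _ (by rw [traj_zero]; simp) (by omega)
  refine ⟨fun ρ => le_trans (hopt ρ) hroot, fun l hl => ?_⟩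
  rw [← V_eq_Q D lam π l]
  exact hbell l hl
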